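/- Let n ≥ 1, let a ∈ ℝ, let u, p : ℝ → ℝ with u (n−1)-times differentiable and p n-times differentiable, and let x : ℝ → ℝ be differentiable with x'(t) = a·(x(t) − p(t)) + u(t) for all t ∈ ℝ. Then q := x − p is n-times differentiable at 0 and q^(n)(0) = r_n − s_n, where r_n := a^n·x(0) + Σ_{k=0}^{n−1} a^(n−1−k)·u^(k)(0) and s_n := Σ_{k=0}^{n} a^(n−k)·p^(k)(0). -/

import Mathlib

open Finset

private lemma iterated_add {n : ℕ} {f g : ℝ → ℝ} (hf : ContDiff ℝ n f) (hg : ContDiff ℝ n g)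
    (t : ℝ) :
    iteratedDeriv n (fun s => f s + g s) t = iteratedDeriv n f t + iteratedDeriv n g t := by
  have : (fun s => f s + g s) = f + g := rfl
  rw [this, ← iteratedDerivWithin_univ, ← iteratedDerivWithin_univ, ← iteratedDerivWithin_univ,
    iteratedDerivWithin_add (Set.mem_univ t) uniqueDiffOn_univ hf.contDiffWithinAt hg.contDiffWithinAt]

private lemma iterated_sub {n : ℕ} {f g : ℝ → ℝ} (hf : ContDiff ℝ n f) (hg : ContDiff ℝ n g)
    (t : ℝ) :
    iteratedDeriv n (fun s => f s - g s) t = iteratedDeriv n f t - iteratedDeriv n g t := by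
  have : (fun s => f s - g s) = f - g := rfl
  rw [this, ← iteratedDerivWithin_univ, ← iteratedDerivWithin_univ, ← iteratedDerivWithin_univ,
    iteratedDerivWithin_sub (Set.mem_univ t) uniqueDiffOn_univ hf.contDiffWithinAt hg.contDiffWithinAt]

private lemma iterated_cmul {n : ℕ} {f : ℝ → ℝ} (hf : ContDiff ℝ n f) (c : ℝ) (t : ℝ) :
    iteratedDeriv n (fun s => c * f s) t = c * iteratedDeriv n f t := by
  rw [← iteratedDerivWithin_univ, ← iteratedDerivWithin_univ,
    iteratedDerivWithin_const_mul (Set.mem_univ t) uniqueDiffOn_univ c hf.contDiffWithinAt]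

private lemma key (N : ℕ) (a : ℝ) (g x : ℝ → ℝ)
    (hg : ContDiff ℝ (N : ℕ) g) (hx : ∀ t : ℝ, HasDerivAt x (a * x t + g t) t) :
    ∀ m : ℕ, m ≤ N + 1 → ContDiff ℝ (m : ℕ) x ∧
      ∀ t, iteratedDeriv m x t =
        a ^ m * x t + ∑ k ∈ range m, a ^ (m - 1 - k) * iteratedDeriv k g t := by
  intro m hm
  induction m with
  | zero =>
    refine ⟨contDiff_zero.2 (continuous_iff_continuousAt.2 fun t =>
      (hx t).differentiableAt.continuousAt), fun t => by simp⟩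
  | succ m ih =>
    have hm' : m ≤ N + 1 := Nat.le_of_succ_le hm
    obtain ⟨hcd, hit⟩ := ih hm'
    have hgm : ContDiff ℝ (m : ℕ) g := hg.of_le (by exact_mod_cast Nat.lt_succ_iff.1 hm)
    have hdx : deriv x = fun t => a * x t + g t := funext fun t => (hx t).deriv
    have hdiff : Differentiable ℝ x := fun t => (hx t).differentiableAt
    have hcd' : ContDiff ℝ ((m + 1 : ℕ)) x := by
      have : ((m + 1 : ℕ) : WithTop ℕ∞) = (m : ℕ) + 1 := by push_cast; ring
      rw [this, contDiff_succ_iff_deriv]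
      refine ⟨hdiff, by simp, hdx ▸ (contDiff_const.mul hcd).add hgm⟩
    refine ⟨hcd', fun t => ?_⟩
    rw [iteratedDeriv_succ', hdx, iterated_add (contDiff_const.mul hcd) hgm t,
      iterated_cmul hcd a t, hit t, Finset.sum_range_succ]
    have h1 : ∀ k ∈ range m, a * (a ^ (m - 1 - k) * iteratedDeriv k g t)
        = a ^ (m + 1 - 1 - k) * iteratedDeriv k g t := by
      intro k hk
      rw [mem_range] at hk
      rw [← mul_assoc, ← pow_succ']
      congr 2
      omega
    rw [mul_add, Finset.mul_sum, Finset.sum_congr rfl h1]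
    have h2 : m + 1 - 1 - m = 0 := by omega
    rw [h2]
    ring

/-- If `u` is `(n−1)`-times differentiable, `p` is `n`-times differentiable, and
`x' = a·(x − p) + u`, then `q := x − p` is `n`-times differentiable at `0` and
`q^(n)(0) = r_n − s_n` with `r_n = a^n·x(0) + Σ_{k<n} a^(n−1−k)·u^(k)(0)` and
`s_n = Σ_{k≤n} a^(n−k)·p^(k)(0)`. -/
theorem iteratedDeriv_quantized_state (n : ℕ) (hn : 1 ≤ n) (a : ℝ) (u p x : ℝ → ℝ)
    (hu : ContDiff ℝ (n - 1 : ℕ) u) (hp : ContDiff ℝ (n : ℕ) p)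
    (hx : ∀ t : ℝ, HasDerivAt x (a * (x t - p t) + u t) t) :
    ContDiffAt ℝ (n : ℕ) (fun t => x t - p t) 0 ∧
      iteratedDeriv n (fun t => x t - p t) 0 =
        (a ^ n * x 0 + ∑ k ∈ Finset.range n, a ^ (n - 1 - k) * iteratedDeriv k u 0)
          - ∑ k ∈ Finset.range (n + 1), a ^ (n - k) * iteratedDeriv k p 0 := by
  set g : ℝ → ℝ := fun t => u t - a * p t with hgdef
  have hpn1 : ContDiff ℝ ((n - 1 : ℕ)) p := hp.of_le (by exact_mod_cast Nat.sub_le n 1)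
  have hg : ContDiff ℝ ((n - 1 : ℕ)) g := hu.sub (contDiff_const.mul hpn1)
  have hx' : ∀ t : ℝ, HasDerivAt x (a * x t + g t) t := by
    intro t
    convert hx t using 1
    simp only [hgdef]; ring
  have hnn : n ≤ (n - 1) + 1 := by omega
  obtain ⟨hcdx, hitx⟩ := key (n - 1) a g x hg hx' n hnn
  constructor
  · exact (hcdx.sub hp).contDiffAt
  · rw [iterated_sub hcdx hp 0, hitx 0]
    have hgk : ∀ k ∈ range n, iteratedDeriv k g 0
        = iteratedDeriv k u 0 - a * iteratedDeriv k p 0 := by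
      intro k hk
      rw [mem_range] at hk
      have hk' : ((k : ℕ) : WithTop ℕ∞) ≤ ((n - 1 : ℕ) : WithTop ℕ∞) := by
        exact_mod_cast Nat.le_sub_one_of_lt hk
      rw [hgdef]
      rw [iterated_sub (hu.of_le hk') (contDiff_const.mul (hpn1.of_le hk')) 0,
        iterated_cmul (hpn1.of_le hk') a 0]
    rw [Finset.sum_congr rfl fun k hk => by
      rw [hgk k hk, mul_sub, ← mul_assoc]]
    rw [Finset.sum_sub_distrib, Finset.sum_range_succ]
    have h3 : ∀ k ∈ range n, a ^ (n - 1 - k) * a * iteratedDeriv k p 0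
        = a ^ (n - k) * iteratedDeriv k p 0 := by
      intro k hk
      rw [mem_range] at hk
      rw [← pow_succ]
      congr 2
      omega
    rw [Finset.sum_congr rfl h3]
    have h4 : n - n = 0 := by omega
    rw [h4]
    ring
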